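/- Let P be a real symmetric idempotent n×n matrix and suppose that for some constant C ≤ 1 the largest eigenvalue of every diagonal block P_{[g,g]} is at most C. Then Σ_{g≠h} tr(P_{[g,h]} P_{[h,g]}) ≥ (1 − C)·tr(P). -/

import Mathlib

open Matrix BigOperators

lemma trace_eq_sum_eig {n : Type*} [Fintype n] [DecidableEq n]
    {A : Matrix n n ℝ} (hA : A.IsHermitian) :
    A.trace = ∑ i, hA.eigenvalues i := by
  set U : Matrix n n ℝ := (hA.eigenvectorUnitary : Matrix n n ℝ) with hUdef
  set D : Matrix n n ℝ := diagonal (RCLike.ofReal ∘ hA.eigenvalues) with hDdef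
  have hU : star U * U = 1 := Matrix.mem_unitaryGroup_iff'.mp hA.eigenvectorUnitary.2
  conv_lhs => rw [hA.spectral_theorem, Unitary.conjStarAlgAut_apply]
  rw [Matrix.trace_mul_comm, ← Matrix.mul_assoc, hU, one_mul, ← hDdef, trace_diagonal]
  simp

lemma trace_mul_self_eq_sum_sq {n : Type*} [Fintype n] [DecidableEq n]
    {A : Matrix n n ℝ} (hA : A.IsHermitian) :
    (A * A).trace = ∑ i, hA.eigenvalues i ^ 2 := by
  set U : Matrix n n ℝ := (hA.eigenvectorUnitary : Matrix n n ℝ) with hUdef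
  set D : Matrix n n ℝ := diagonal (RCLike.ofReal ∘ hA.eigenvalues) with hDdef
  have hU : star U * U = 1 := Matrix.mem_unitaryGroup_iff'.mp hA.eigenvectorUnitary.2
  have hsp : A = U * D * star U := hA.spectral_theorem
  have hmul : (U * D * star U) * (U * D * star U) = U * (D * D) * star U := by
    calc (U * D * star U) * (U * D * star U)
        = U * D * ((star U * U) * (D * star U)) := by noncomm_ring
      _ = U * (D * D) * star U := by rw [hU, one_mul]; noncomm_ring
  rw [← hsp] at hmul
  rw [show A * A = U * (D * D) * star U from hmul, Matrix.trace_mul_comm, ← Matrix.mul_assoc,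
    hU, one_mul, hDdef, diagonal_mul_diagonal, trace_diagonal]
  simp [pow_two]

/-- Index set of `n = n₁ + … + n_G` observations, grouped into `G` clusters. -/
abbrev ClusterIdx {G : ℕ} (ng : Fin G → ℕ) := Σ g : Fin G, Fin (ng g)

/-- The submatrix `A_{[g,h]}`: rows in cluster `g`, columns in cluster `h`. -/
def clusterSub {G : ℕ} {ng : Fin G → ℕ} (A : Matrix (ClusterIdx ng) (ClusterIdx ng) ℝ)
    (g h : Fin G) : Matrix (Fin (ng g)) (Fin (ng h)) ℝ :=
  Matrix.of fun i j => A ⟨g, i⟩ ⟨h, j⟩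

/-- lower bound on `∑_{g≠h} tr(P_{[g,h]} P_{[h,g]})`, proof of Theorem 2:
if `P` is symmetric idempotent and every diagonal block `P_{[g,g]}` has all eigenvalues
at most `C ≤ 1`, then `∑_{g≠h} tr(P_{[g,h]} P_{[h,g]}) ≥ (1 - C) · tr(P)`. -/
theorem sum_offdiag_trace_ge
    {G : ℕ} (ng : Fin G → ℕ)
    (P : Matrix (ClusterIdx ng) (ClusterIdx ng) ℝ)
    (hPsymm : P.IsSymm) (hPidem : P * P = P)
    (C : ℝ) (hC1 : C ≤ 1)
    (hblock : ∀ g : Fin G, (clusterSub P g g).IsHermitian)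
    (hCbound : ∀ (g : Fin G) (i : Fin (ng g)), (hblock g).eigenvalues i ≤ C) :
    (1 - C) * P.trace ≤
      ∑ g : Fin G, ∑ h : Fin G, if g = h then 0 else
        (clusterSub P g h * clusterSub P h g).trace := by
  set T : Fin G → Fin G → ℝ := fun g h => (clusterSub P g h * clusterSub P h g).trace with hT
  -- total sum equals trace of P
  have htot : ∑ g, ∑ h, T g h = P.trace := by
    conv_rhs => rw [← hPidem]
    rw [Matrix.trace, ← Finset.univ_sigma_univ, Finset.sum_sigma]
    refine Finset.sum_congr rfl fun g _ => ?_
    simp only [hT, Matrix.trace, Matrix.diag, Matrix.mul_apply, clusterSub, Matrix.of_apply]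
    rw [Finset.sum_comm]
    refine Finset.sum_congr rfl fun i _ => ?_
    rw [← Finset.univ_sigma_univ, Finset.sum_sigma]
  -- sum of diagonal block traces equals trace of P
  have hdiag : ∑ g, (clusterSub P g g).trace = P.trace := by
    rw [Matrix.trace, ← Finset.univ_sigma_univ, Finset.sum_sigma]
    rfl
  -- P is positive semidefinite
  have hH : P.IsHermitian := by
    have : Pᴴ = Pᵀ := by ext i j; simp [Matrix.conjTranspose_apply, Matrix.transpose_apply]
    rw [Matrix.IsHermitian, this, hPsymm]
  have hPsd : P.PosSemidef := by
    have : P = Pᴴ * P := by rw [hH, hPidem]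
    rw [this]; exact posSemidef_conjTranspose_mul_self P
  have hblkPSD : ∀ g, (clusterSub P g g).PosSemidef := fun g =>
    hPsd.submatrix (fun i : Fin (ng g) => (⟨g, i⟩ : ClusterIdx ng))
  -- diagonal block squared trace bound
  have hsq : ∀ g, T g g ≤ C * (clusterSub P g g).trace := by
    intro g
    simp only [hT]
    rw [trace_mul_self_eq_sum_sq (hblock g), trace_eq_sum_eig (hblock g),
      Finset.mul_sum]
    refine Finset.sum_le_sum fun i _ => ?_
    have h0 : 0 ≤ (hblock g).eigenvalues i := (hblkPSD g).eigenvalues_nonneg i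
    have := hCbound g i
    nlinarith
  -- rewrite off-diagonal sum
  have hoff : ∀ g, ∑ h, (if g = h then 0 else T g h) = (∑ h, T g h) - T g g := by
    intro g
    have h1 : ∀ h, (if g = h then 0 else T g h) = T g h - (if g = h then T g h else 0) := by
      intro h; split_ifs with hh <;> simp
    rw [Finset.sum_congr rfl fun h _ => h1 h, Finset.sum_sub_distrib, Finset.sum_ite_eq]
    simp
  have hsum : ∑ g : Fin G, ∑ h : Fin G, (if g = h then 0 else T g h)
      = P.trace - ∑ g, T g g := by
    rw [Finset.sum_congr rfl fun g _ => hoff g, Finset.sum_sub_distrib, htot]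
  rw [show (∑ g : Fin G, ∑ h : Fin G, if g = h then 0 else
      (clusterSub P g h * clusterSub P h g).trace)
      = ∑ g : Fin G, ∑ h : Fin G, (if g = h then 0 else T g h) from rfl, hsum]
  have hTle : ∑ g, T g g ≤ C * P.trace := by
    rw [← hdiag, Finset.mul_sum]
    exact Finset.sum_le_sum fun g _ => hsq g
  linarith
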